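/- Let G_1 and G_2 be free groups, let T be a free group on two generators a, b, and let i : T → G_1 and j : T → G_2 be homomorphisms such that {i(a), i(b)} extends to a basis of G_1 (i.e., i(a), i(b) are part of a free generating set of G_1). Then the pushout (amalgamated product) G_1 *_T G_2 along i and j is a free group. -/

import Mathlib

open Monoid

namespace Stmt3Aux

/-- The target free group: generators indexed by basis elements of `G₁` of index `≥ 2`,
together with the generators of `G₂`. -/
abbrev F (n₁ n₂ : ℕ) := FreeGroup ({k : Fin n₁ // 2 ≤ (k : ℕ)} ⊕ Fin n₂)

/-- The map from `G₂` to the target free group. -/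
def φ₂ (n₁ n₂ : ℕ) : FreeGroup (Fin n₂) →* F n₁ n₂ :=
  FreeGroup.lift fun m => FreeGroup.of (Sum.inr m)

/-- The images of the new basis elements of `G₁`. -/
def f {n₁ n₂ : ℕ} (j : FreeGroup Bool →* FreeGroup (Fin n₂)) (k : Fin n₁) : F n₁ n₂ :=
  if h : 2 ≤ (k : ℕ) then FreeGroup.of (Sum.inl ⟨k, h⟩)
  else if (k : ℕ) = 0 then φ₂ n₁ n₂ (j (FreeGroup.of true))
  else φ₂ n₁ n₂ (j (FreeGroup.of false))

theorem aux (n₁ n₂ : ℕ) (hn₁ : 2 ≤ n₁)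
    (i : FreeGroup Bool →* FreeGroup (Fin n₁))
    (j : FreeGroup Bool →* FreeGroup (Fin n₂))
    (z : Fin n₁ → FreeGroup (Fin n₁))
    (hz : Function.Bijective (FreeGroup.lift z))
    (hz0 : z ⟨0, lt_of_lt_of_le (by norm_num) hn₁⟩ = i (FreeGroup.of true))
    (hz1 : z ⟨1, lt_of_lt_of_le (by norm_num) hn₁⟩ = i (FreeGroup.of false)) :
    IsFreeGroup
      (Coprod (FreeGroup (Fin n₁)) (FreeGroup (Fin n₂)) ⧸
        Subgroup.normalClosure
          {Coprod.inl (i (FreeGroup.of true)) * (Coprod.inr (j (FreeGroup.of true)))⁻¹,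
           Coprod.inl (i (FreeGroup.of false)) * (Coprod.inr (j (FreeGroup.of false)))⁻¹}) := by
  set N := Subgroup.normalClosure
      {Coprod.inl (i (FreeGroup.of true)) * (Coprod.inr (j (FreeGroup.of true)))⁻¹,
       Coprod.inl (i (FreeGroup.of false)) * (Coprod.inr (j (FreeGroup.of false)))⁻¹} with hN
  have h0 : (0 : ℕ) < n₁ := by omega
  have h1 : (1 : ℕ) < n₁ := by omega
  set e : FreeGroup (Fin n₁) ≃* FreeGroup (Fin n₁) :=
    MulEquiv.ofBijective (FreeGroup.lift z) hz with he
  have he_of : ∀ k, e (FreeGroup.of k) = z k := fun k => FreeGroup.lift_apply_of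
  have hesymm : ∀ k, e.symm (z k) = FreeGroup.of k := by
    intro k
    rw [MulEquiv.symm_apply_eq, he_of]
  set φ₁ : FreeGroup (Fin n₁) →* F n₁ n₂ :=
    (FreeGroup.lift (f j)).comp e.symm.toMonoidHom with hφ₁
  set φ : Coprod (FreeGroup (Fin n₁)) (FreeGroup (Fin n₂)) →* F n₁ n₂ :=
    Coprod.lift φ₁ (φ₂ n₁ n₂) with hφ
  have hφ₁z : ∀ k, φ₁ (z k) = f j k := by
    intro k
    rw [hφ₁, MonoidHom.comp_apply, MulEquiv.coe_toMonoidHom, hesymm, FreeGroup.lift_apply_of]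
  have hf2 : ∀ (k : Fin n₁) (h : 2 ≤ (k : ℕ)),
      f j k = FreeGroup.of (Sum.inl ⟨k, h⟩) := fun k h => dif_pos h
  have hf0 : f j ⟨0, h0⟩ = φ₂ n₁ n₂ (j (FreeGroup.of true)) := by simp [f]
  have hf1 : f j ⟨1, h1⟩ = φ₂ n₁ n₂ (j (FreeGroup.of false)) := by simp [f]
  have hφ₁a : φ₁ (i (FreeGroup.of true)) = φ₂ n₁ n₂ (j (FreeGroup.of true)) := by
    rw [← hz0, hφ₁z, hf0]
  have hφ₁b : φ₁ (i (FreeGroup.of false)) = φ₂ n₁ n₂ (j (FreeGroup.of false)) := by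
    rw [← hz1, hφ₁z, hf1]
  have hφinl : ∀ g, φ (Coprod.inl g) = φ₁ g := by
    intro g; rw [hφ, Coprod.lift_apply_inl]
  have hφinr : ∀ g, φ (Coprod.inr g) = φ₂ n₁ n₂ g := by
    intro g; rw [hφ, Coprod.lift_apply_inr]
  have hker : N ≤ φ.ker := by
    apply Subgroup.normalClosure_le_normal
    intro x hx
    rcases hx with h | h
    · subst h
      simp [MonoidHom.mem_ker, hφinl, hφinr, hφ₁a]
    · simp only [Set.mem_singleton_iff] at h
      subst h
      simp [MonoidHom.mem_ker, hφinl, hφinr, hφ₁b]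
  set Φ := QuotientGroup.lift N φ hker with hΦ
  set mk := QuotientGroup.mk' N with hmk
  have hΦmk : ∀ x, Φ (mk x) = φ x := fun _ => rfl
  set Ψ : F n₁ n₂ →* _ :=
    FreeGroup.lift (Sum.elim (fun k : {k : Fin n₁ // 2 ≤ (k : ℕ)} => mk (Coprod.inl (z k.1)))
      (fun m => mk (Coprod.inr (FreeGroup.of m)))) with hΨ
  have hΨinl : ∀ k : {k : Fin n₁ // 2 ≤ (k : ℕ)},
      Ψ (FreeGroup.of (Sum.inl k)) = mk (Coprod.inl (z k.1)) := by
    intro k; rw [hΨ, FreeGroup.lift_apply_of, Sum.elim_inl]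
  have hΨinr : ∀ m, Ψ (FreeGroup.of (Sum.inr m)) = mk (Coprod.inr (FreeGroup.of m)) := by
    intro m; rw [hΨ, FreeGroup.lift_apply_of, Sum.elim_inr]
  have hφ₂of : ∀ m, φ₂ n₁ n₂ (FreeGroup.of m) = FreeGroup.of (Sum.inr m) :=
    fun m => FreeGroup.lift_apply_of
  -- key relations in the quotient
  have hrel : ∀ (s : Bool), mk (Coprod.inl (i (FreeGroup.of s)))
      = mk (Coprod.inr (j (FreeGroup.of s))) := by
    intro s
    set x : Coprod (FreeGroup (Fin n₁)) (FreeGroup (Fin n₂)) := Coprod.inl (i (FreeGroup.of s)) with hx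
    set y : Coprod (FreeGroup (Fin n₁)) (FreeGroup (Fin n₂)) := Coprod.inr (j (FreeGroup.of s)) with hy
    have hmem : x * y⁻¹ ∈ N := by
      apply Subgroup.subset_normalClosure
      cases s
      · exact Or.inr rfl
      · exact Or.inl rfl
    rw [hmk, QuotientGroup.mk'_eq_mk']
    refine ⟨x⁻¹ * (x * y⁻¹)⁻¹ * (x⁻¹)⁻¹, ?_, by group⟩
    exact Subgroup.normalClosure_normal.conj_mem _ (Subgroup.inv_mem _ hmem) _
  have hΨφ₂ : Ψ.comp (φ₂ n₁ n₂) = mk.comp Coprod.inr := by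
    apply FreeGroup.ext_hom
    intro m
    rw [MonoidHom.comp_apply, MonoidHom.comp_apply, hφ₂of, hΨinr]
  have hΨφ₁ : Ψ.comp φ₁ = mk.comp Coprod.inl := by
    have hcomp : (Ψ.comp φ₁).comp e.toMonoidHom
        = (mk.comp Coprod.inl).comp e.toMonoidHom := by
      apply FreeGroup.ext_hom
      intro k
      simp only [MonoidHom.comp_apply, MulEquiv.coe_toMonoidHom, he_of]
      rw [hφ₁z]
      by_cases h : 2 ≤ (k : ℕ)
      · rw [hf2 k h, hΨinl]
      · by_cases h0' : (k : ℕ) = 0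
        · have hk : k = ⟨0, h0⟩ := Fin.ext h0'
          rw [hk, hf0]
          have h2 := DFunLike.congr_fun hΨφ₂ (j (FreeGroup.of true))
          simp only [MonoidHom.comp_apply] at h2
          rw [h2, hz0]
          exact (hrel true).symm
        · have h1' : (k : ℕ) = 1 := by have := k.2; omega
          have hk : k = ⟨1, h1⟩ := Fin.ext h1'
          rw [hk, hf1]
          have h2 := DFunLike.congr_fun hΨφ₂ (j (FreeGroup.of false))
          simp only [MonoidHom.comp_apply] at h2
          rw [h2, hz1]
          exact (hrel false).symm
    apply MonoidHom.ext
    intro x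
    have h2 := DFunLike.congr_fun hcomp (e.symm x)
    simpa using h2
  have hΨΦ : Ψ.comp Φ = MonoidHom.id _ := by
    apply QuotientGroup.monoidHom_ext
    rw [← hmk]
    apply Coprod.hom_ext
    · apply MonoidHom.ext
      intro g
      simp only [MonoidHom.comp_apply, MonoidHom.id_apply]
      rw [hΦmk, hφinl]
      exact DFunLike.congr_fun hΨφ₁ g
    · apply MonoidHom.ext
      intro g
      simp only [MonoidHom.comp_apply, MonoidHom.id_apply]
      rw [hΦmk, hφinr]
      exact DFunLike.congr_fun hΨφ₂ g
  have hΦΨ : Φ.comp Ψ = MonoidHom.id _ := by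
    apply FreeGroup.ext_hom
    intro x
    rcases x with k | m
    · rw [MonoidHom.comp_apply, MonoidHom.id_apply, hΨinl, hΦmk, hφinl, hφ₁z,
        hf2 k.1 k.2]
    · rw [MonoidHom.comp_apply, MonoidHom.id_apply, hΨinr, hΦmk, hφinr, hφ₂of]
  exact IsFreeGroup.ofMulEquiv (MonoidHom.toMulEquiv Φ Ψ hΨΦ hΦΨ).symm

end Stmt3Aux

/-- If `G₁` is free of rank `n₁ ≥ 2`, `G₂` is free of rank `n₂`, and `i(a), i(b)` are
part of a free generating set of `G₁`, then the pushout `G₁ *_T G₂` along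
`i : T → G₁`, `j : T → G₂` (with `T` free on two generators) is a free group. -/
theorem stmt3 (n₁ n₂ : ℕ) (hn₁ : 2 ≤ n₁)
    (i : FreeGroup Bool →* FreeGroup (Fin n₁))
    (j : FreeGroup Bool →* FreeGroup (Fin n₂))
    (hbasis : ∃ z : Fin n₁ → FreeGroup (Fin n₁),
      Function.Bijective (FreeGroup.lift z) ∧
      z ⟨0, by omega⟩ = i (FreeGroup.of true) ∧
      z ⟨1, by omega⟩ = i (FreeGroup.of false)) :
    IsFreeGroup
      (Coprod (FreeGroup (Fin n₁)) (FreeGroup (Fin n₂)) ⧸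
        Subgroup.normalClosure
          {Coprod.inl (i (FreeGroup.of true)) * (Coprod.inr (j (FreeGroup.of true)))⁻¹,
           Coprod.inl (i (FreeGroup.of false)) * (Coprod.inr (j (FreeGroup.of false)))⁻¹}) := by
  obtain ⟨z, hz, hz0, hz1⟩ := hbasis
  exact Stmt3Aux.aux n₁ n₂ hn₁ i j z hz hz0 hz1
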